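/- Let C' = (C'; C'_0; C'_1,...,C'_r) and C'' = (C''; C''_0; C''_1,...,C''_r) be two maximal P-decompositions of a linear code C ⊆ F_q^n, and let T ∈ GL_P(n) be a linear P-isometry with T(C') = C''. Then there is a permutation σ of {1,...,r} such that T(C'_i) = C''_{σ(i)} for every i. -/

import Mathlib

/-- `I` is an ideal of the poset `P` on `[n]`. -/
def IsPosetIdeal {n : ℕ} (P : PartialOrder (Fin n)) (I : Set (Fin n)) : Prop :=
  ∀ i ∈ I, ∀ j, P.le j i → j ∈ I

/-- The smallest ideal of `P` containing `X`. -/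
def idealGen {n : ℕ} (P : PartialOrder (Fin n)) (X : Set (Fin n)) : Set (Fin n) :=
  ⋂₀ {I | IsPosetIdeal P I ∧ X ⊆ I}

/-- The `P`-weight `ω_P(x) = |⟨supp(x)⟩|`. -/
noncomputable def posetWeight {F : Type*} [Field F] {n : ℕ} (P : PartialOrder (Fin n))
    (x : Fin n → F) : ℕ :=
  (idealGen P {i | x i ≠ 0}).ncard

/-- The `P`-distance `d_P(x,y) = ω_P(x - y)`. -/
noncomputable def posetDist {F : Type*} [Field F] {n : ℕ} (P : PartialOrder (Fin n))
    (x y : Fin n → F) : ℕ :=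
  posetWeight P (x - y)

/-- A linear `P`-isometry of `F_q^n`. -/
def IsPIsometry {F : Type*} [Field F] {n : ℕ} (P : PartialOrder (Fin n))
    (T : (Fin n → F) ≃ₗ[F] (Fin n → F)) : Prop :=
  ∀ x y, posetDist P (T x) (T y) = posetDist P x y

/-- The support of a subspace `D ⊆ F_q^n`. -/
def suppS {F : Type*} [Field F] {n : ℕ} (D : Submodule F (Fin n → F)) : Set (Fin n) :=
  {j | ∃ x ∈ D, x j ≠ 0}

/-- `C_0`: the subspace of all vectors vanishing on the support of `C`. -/
def coSupp {F : Type*} [Field F] {n : ℕ} (C : Submodule F (Fin n → F)) :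
    Submodule F (Fin n → F) where
  carrier := {x | ∀ j ∈ suppS C, x j = 0}
  add_mem' := by
    intro a b ha hb j hj
    simp only [Set.mem_setOf_eq] at ha hb ⊢
    rw [Pi.add_apply, ha j hj, hb j hj, add_zero]
  zero_mem' := by intro j _; rfl
  smul_mem' := by
    intro c a ha j hj
    simp only [Set.mem_setOf_eq] at ha ⊢
    rw [Pi.smul_apply, ha j hj, smul_zero]

/-- A decomposition `(C; C_0; C_1, …, C_r)` of a linear code `C ⊆ F_q^n`:
nonzero subspaces `C_1, …, C_r` with pairwise disjoint supports whose internal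
direct sum is `C`.  (The distinguished part `C_0 = coSupp C` is determined by `C`.) -/
structure Decomposition {F : Type*} [Field F] {n : ℕ} (C : Submodule F (Fin n → F)) where
  r : ℕ
  D : Fin r → Submodule F (Fin n → F)
  ne_bot : ∀ i, D i ≠ ⊥
  indep : iSupIndep D
  sup_eq : ⨆ i, D i = C
  disj : Pairwise fun i j => Disjoint (suppS (D i)) (suppS (D j))

/-- A `P`-decomposition of `C`: a decomposition of a code `C'` that is
`P`-equivalent to `C`. -/
structure PDecomposition {F : Type*} [Field F] {n : ℕ} (P : PartialOrder (Fin n))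
    (C : Submodule F (Fin n → F)) where
  C' : Submodule F (Fin n → F)
  T : (Fin n → F) ≃ₗ[F] (Fin n → F)
  isom : IsPIsometry P T
  image : Submodule.map (T : (Fin n → F) →ₗ[F] (Fin n → F)) C = C'
  dec : Decomposition C'

/-- A trivial `P`-decomposition of `C`: a single component, with
`|supp(C')| = |supp(C)|` and `|supp(C'_0)| = |supp(C_0)|`. -/
def PDecomposition.IsTrivial {F : Type*} [Field F] {n : ℕ} {P : PartialOrder (Fin n)}
    {C : Submodule F (Fin n → F)} (d : PDecomposition P C) : Prop :=
  d.dec.r = 1 ∧ (suppS d.C').ncard = (suppS C).ncard ∧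
    (suppS (coSupp d.C')).ncard = (suppS (coSupp C)).ncard

/-- A code is `P`-irreducible if it admits no non-trivial `P`-decomposition. -/
def PIrreducible {F : Type*} [Field F] {n : ℕ} (P : PartialOrder (Fin n))
    (C : Submodule F (Fin n → F)) : Prop :=
  ∀ d : PDecomposition P C, d.IsTrivial

/-- A `P`-decomposition is maximal if each of its components is `P`-irreducible. -/
def PDecomposition.IsMaximal {F : Type*} [Field F] {n : ℕ} {P : PartialOrder (Fin n)}
    {C : Submodule F (Fin n → F)} (d : PDecomposition P C) : Prop :=
  ∀ i, PIrreducible P (d.dec.D i)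

open scoped Classical

section Aux

variable {F : Type*} [Field F] {n : ℕ}

lemma suppS_mono {M N : Submodule F (Fin n → F)} (h : M ≤ N) : suppS M ⊆ suppS N := by
  rintro j ⟨x, hx, hxj⟩; exact ⟨x, h hx, hxj⟩

lemma mem_suppS_of {M : Submodule F (Fin n → F)} {x : Fin n → F} (hx : x ∈ M) {j : Fin n}
    (h : x j ≠ 0) : j ∈ suppS M := ⟨x, hx, h⟩

lemma suppS_bot : suppS (⊥ : Submodule F (Fin n → F)) = ∅ := by
  ext j
  simp only [suppS, Set.mem_setOf_eq, Submodule.mem_bot, Set.mem_empty_iff_false, iff_false]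
  rintro ⟨x, rfl, hx⟩
  exact hx rfl

lemma suppS_iSup {ι : Type*} (D : ι → Submodule F (Fin n → F)) :
    suppS (⨆ i, D i) = ⋃ i, suppS (D i) := by
  apply subset_antisymm
  · rintro j ⟨x, hx, hxj⟩
    refine Submodule.iSup_induction (motive := fun y => y j ≠ 0 → j ∈ ⋃ i, suppS (D i)) D hx
      ?_ ?_ ?_ hxj
    · intro i y hy h
      exact Set.mem_iUnion.2 ⟨i, y, hy, h⟩
    · intro h; exact absurd rfl h
    · intro a b ha hb h
      by_cases haz : a j = 0
      · exact hb (by simpa [haz] using h)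
      · exact ha haz
  · intro j hj
    obtain ⟨i, hi⟩ := Set.mem_iUnion.1 hj
    obtain ⟨x, hx, h⟩ := hi
    exact ⟨x, Submodule.mem_iSup_of_mem i hx, h⟩

lemma suppS_coSupp (M : Submodule F (Fin n → F)) : suppS (coSupp M) = (suppS M)ᶜ := by
  ext j
  constructor
  · rintro ⟨x, hx, hxj⟩ hj
    exact hxj (hx j hj)
  · intro hj
    refine ⟨Pi.single j 1, ?_, by simp⟩
    intro k hk
    have hkj : k ≠ j := fun h => hj (h ▸ hk)
    exact Pi.single_eq_of_ne hkj 1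

lemma ncard_compl_eq {s t : Set (Fin n)} (h : s.ncard = t.ncard) : sᶜ.ncard = tᶜ.ncard := by
  have h1 := Set.ncard_add_ncard_compl s
  have h2 := Set.ncard_add_ncard_compl t
  omega

end Aux
section Aux2

variable {F : Type*} [Field F] {n : ℕ} {P : PartialOrder (Fin n)}

lemma IsPIsometry.trans' {T S : (Fin n → F) ≃ₗ[F] (Fin n → F)}
    (hT : IsPIsometry P T) (hS : IsPIsometry P S) : IsPIsometry P (T.trans S) := fun x y => by
  simpa using (hS (T x) (T y)).trans (hT x y)

lemma IsPIsometry.symm' {T : (Fin n → F) ≃ₗ[F] (Fin n → F)} (hT : IsPIsometry P T) :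
    IsPIsometry P T.symm := fun x y => by
  have := hT (T.symm x) (T.symm y)
  simpa using this.symm

lemma isPIsometry_refl : IsPIsometry P (LinearEquiv.refl F (Fin n → F)) := fun _ _ => rfl

lemma map_ne_bot (S : (Fin n → F) ≃ₗ[F] (Fin n → F)) {D : Submodule F (Fin n → F)}
    (h : D ≠ ⊥) : Submodule.map (S : (Fin n → F) →ₗ[F] (Fin n → F)) D ≠ ⊥ := by
  obtain ⟨x, hx, h0⟩ := (Submodule.ne_bot_iff D).1 h
  exact (Submodule.ne_bot_iff _).2 ⟨S x, ⟨x, hx, rfl⟩, fun hz => h0 (S.map_eq_zero_iff.1 hz)⟩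

lemma map_symm_map (T : (Fin n → F) ≃ₗ[F] (Fin n → F)) (M : Submodule F (Fin n → F)) :
    Submodule.map (T.symm : (Fin n → F) →ₗ[F] (Fin n → F))
      (Submodule.map (T : (Fin n → F) →ₗ[F] (Fin n → F)) M) = M := by
  ext x
  simp only [Submodule.mem_map, LinearEquiv.coe_coe]
  constructor
  · rintro ⟨y, ⟨z, hz, rfl⟩, rfl⟩
    simpa using hz
  · intro hx
    exact ⟨T x, ⟨x, hx, rfl⟩, by simp⟩

/-- the empty decomposition of `⊥`. -/
def botDec : Decomposition (⊥ : Submodule F (Fin n → F)) where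
  r := 0
  D := fun i => i.elim0
  ne_bot := fun i => i.elim0
  indep := fun i => i.elim0
  sup_eq := by simp
  disj := fun {i} => i.elim0

lemma PIrreducible.ne_bot {D : Submodule F (Fin n → F)} (h : PIrreducible P D) : D ≠ ⊥ := by
  intro hbot
  exact Nat.zero_ne_one ((h (PDecomposition.mk ⊥ (LinearEquiv.refl F _) isPIsometry_refl
    (by simp [hbot]) botDec)).1)

lemma indep_of_disjoint_suppS {r : ℕ} (D : Fin r → Submodule F (Fin n → F))
    (hd : Pairwise fun i j => Disjoint (suppS (D i)) (suppS (D j))) : iSupIndep D := by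
  intro i
  rw [Submodule.disjoint_def]
  intro x hxi hxs
  by_contra hx0
  obtain ⟨j, hj⟩ : ∃ j, x j ≠ 0 := by
    by_contra hall
    push_neg at hall
    exact hx0 (funext hall)
  have hji : j ∈ suppS (D i) := mem_suppS_of hxi hj
  have hjs : j ∈ suppS (⨆ (k) (_ : k ≠ i), D k) := mem_suppS_of hxs hj
  rw [suppS_iSup] at hjs
  obtain ⟨k, hk⟩ := Set.mem_iUnion.1 hjs
  by_cases hki : k = i
  · subst hki
    rw [show (⨆ (_ : k ≠ k), D k) = ⊥ by simp, suppS_bot] at hk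
    exact hk
  · have hk' : j ∈ suppS (D k) := suppS_mono (iSup_le fun _ => le_rfl) hk
    exact Set.disjoint_left.1 (hd (Ne.symm hki)) hji hk'

/-- one-component decomposition. -/
def singleDec (M : Submodule F (Fin n → F)) (h : M ≠ ⊥) : Decomposition M where
  r := 1
  D := fun _ => M
  ne_bot := fun _ => h
  indep := indep_of_disjoint_suppS _ (fun {i j} hij => absurd (Subsingleton.elim i j) hij)
  sup_eq := by simp
  disj := fun {i j} hij => absurd (Subsingleton.elim i j) hij

lemma ncard_suppS_map {D : Submodule F (Fin n → F)} (hD : PIrreducible P D)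
    (S : (Fin n → F) ≃ₗ[F] (Fin n → F)) (hS : IsPIsometry P S) :
    (suppS (Submodule.map (S : (Fin n → F) →ₗ[F] (Fin n → F)) D)).ncard = (suppS D).ncard := by
  exact (hD (PDecomposition.mk _ S hS rfl (singleDec _ (map_ne_bot S hD.ne_bot)))).2.1

lemma dec_r_eq_one {D M : Submodule F (Fin n → F)} (hD : PIrreducible P D)
    (S : (Fin n → F) ≃ₗ[F] (Fin n → F)) (hS : IsPIsometry P S)
    (him : Submodule.map (S : (Fin n → F) →ₗ[F] (Fin n → F)) D = M)
    (dec : Decomposition M) : dec.r = 1 :=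
  (hD ⟨M, S, hS, him, dec⟩).1

lemma PIrreducible.map {D : Submodule F (Fin n → F)} (hD : PIrreducible P D)
    (S : (Fin n → F) ≃ₗ[F] (Fin n → F)) (hS : IsPIsometry P S) :
    PIrreducible P (Submodule.map (S : (Fin n → F) →ₗ[F] (Fin n → F)) D) := by
  intro pd
  have him : Submodule.map ((S.trans pd.T) : (Fin n → F) →ₗ[F] (Fin n → F)) D = pd.C' := by
    rw [← pd.image]
    ext x
    simp [Submodule.mem_map]
  obtain ⟨h1, h2, h3⟩ := hD
    (PDecomposition.mk pd.C' (S.trans pd.T) (hS.trans' pd.isom) him pd.dec)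
  have hcard := ncard_suppS_map hD S hS
  refine ⟨h1, by rw [hcard]; exact h2, ?_⟩
  rw [suppS_coSupp, suppS_coSupp] at h3 ⊢
  exact ncard_compl_eq (by rw [hcard]; exact h2)

end Aux2
section Aux3

variable {F : Type*} [Field F] {n : ℕ}

/-- coordinate cutoff as a linear map. -/
noncomputable def cutL (B : Set (Fin n)) : (Fin n → F) →ₗ[F] (Fin n → F) where
  toFun x := fun j => if j ∈ B then x j else 0
  map_add' x y := by funext j; by_cases h : j ∈ B <;> simp [h]
  map_smul' c x := by funext j; by_cases h : j ∈ B <;> simp [h]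

lemma cutL_apply (B : Set (Fin n)) (x : Fin n → F) (j : Fin n) :
    cutL B x j = if j ∈ B then x j else 0 := rfl

lemma cutL_eq_self {B : Set (Fin n)} {x : Fin n → F} (h : ∀ j, x j ≠ 0 → j ∈ B) :
    cutL B x = x := by
  funext j
  rw [cutL_apply]
  by_cases hj : j ∈ B
  · rw [if_pos hj]
  · rw [if_neg hj]
    by_contra hx
    exact hj (h j (Ne.symm hx))

lemma cutL_eq_zero {B : Set (Fin n)} {x : Fin n → F} (h : ∀ j ∈ B, x j = 0) :
    cutL B x = 0 := by
  funext j
  rw [cutL_apply]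
  by_cases hj : j ∈ B
  · rw [if_pos hj]; exact h j hj
  · rw [if_neg hj]; rfl

lemma cutL_support {B : Set (Fin n)} {x : Fin n → F} {j : Fin n} (h : cutL B x j ≠ 0) :
    j ∈ B ∧ x j ≠ 0 := by
  rw [cutL_apply] at h
  by_cases hj : j ∈ B
  · exact ⟨hj, by rwa [if_pos hj] at h⟩
  · rw [if_neg hj] at h; exact absurd rfl h

/-- cutting along the support of a component lands in that component. -/
lemma cut_mem {s : ℕ} (E : Fin s → Submodule F (Fin n → F))
    (hdisj : Pairwise fun i j => Disjoint (suppS (E i)) (suppS (E j)))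
    (j : Fin s) {x : Fin n → F} (hx : x ∈ ⨆ k, E k) :
    cutL (suppS (E j)) x ∈ E j := by
  refine Submodule.iSup_induction (motive := fun y => cutL (suppS (E j)) y ∈ E j) E hx ?_ ?_ ?_
  · intro k y hy
    by_cases hkj : k = j
    · subst hkj
      rw [cutL_eq_self (fun l hl => mem_suppS_of hy hl)]
      exact hy
    · rw [cutL_eq_zero (fun l hl => ?_)]
      · exact zero_mem _
      · by_contra hyl
        exact Set.disjoint_left.1 (hdisj hkj) (mem_suppS_of hy hyl) hl
  · show cutL (suppS (E j)) 0 ∈ E j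
    rw [map_zero]; exact zero_mem _
  · intro a b ha hb
    show cutL (suppS (E j)) (a + b) ∈ E j
    rw [map_add]; exact add_mem ha hb

/-- reconstruction of an element from its cuts. -/
lemma sum_cut {s : ℕ} (E : Fin s → Submodule F (Fin n → F))
    (hdisj : Pairwise fun i j => Disjoint (suppS (E i)) (suppS (E j)))
    {x : Fin n → F} (hx : x ∈ ⨆ k, E k) :
    ∑ j, cutL (suppS (E j)) x = x := by
  funext l
  rw [Finset.sum_apply]
  by_cases hl : x l = 0
  · simp [cutL_apply, hl]
  · have hls : l ∈ suppS (⨆ k, E k) := mem_suppS_of hx hl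
    rw [suppS_iSup] at hls
    obtain ⟨j₀, hj₀⟩ := Set.mem_iUnion.1 hls
    rw [Finset.sum_eq_single j₀]
    · rw [cutL_apply, if_pos hj₀]
    · intro j _ hjj
      rw [cutL_apply, if_neg]
      intro hlj
      exact Set.disjoint_left.1 (hdisj hjj) hlj hj₀
    · intro h; exact absurd (Finset.mem_univ j₀) h

end Aux3
section Aux4

variable {n : ℕ}

lemma toFinset_iUnion' {r : ℕ} (A : Fin r → Set (Fin n)) :
    (⋃ i, A i).toFinset = Finset.univ.biUnion fun i => (A i).toFinset := by
  ext a; simp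

lemma ncard_iUnion_le {r : ℕ} (A : Fin r → Set (Fin n)) :
    (⋃ i, A i).ncard ≤ ∑ i, (A i).ncard := by
  rw [Set.ncard_eq_toFinset_card' _, toFinset_iUnion']
  calc (Finset.univ.biUnion fun i => (A i).toFinset).card
      ≤ ∑ i, (A i).toFinset.card := Finset.card_biUnion_le
    _ = ∑ i, (A i).ncard := by
        refine Finset.sum_congr rfl fun i _ => ?_
        rw [Set.ncard_eq_toFinset_card' _]

lemma ncard_iUnion_eq {r : ℕ} (A : Fin r → Set (Fin n))
    (h : Pairwise fun i j => Disjoint (A i) (A j)) :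
    (⋃ i, A i).ncard = ∑ i, (A i).ncard := by
  rw [Set.ncard_eq_toFinset_card' _, toFinset_iUnion']
  rw [Finset.card_biUnion (fun i _ j _ hij => Set.disjoint_toFinset.2 (h hij))]
  refine Finset.sum_congr rfl fun i _ => ?_
  rw [Set.ncard_eq_toFinset_card' _]

lemma disjoint_of_ncard_iUnion {r : ℕ} (A : Fin r → Set (Fin n))
    (h : (⋃ i, A i).ncard = ∑ i, (A i).ncard) :
    Pairwise fun i j => Disjoint (A i) (A j) := by
  intro i j hij
  rw [Set.disjoint_left]
  intro a hai haj
  -- pass to Finsets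
  set B : Fin r → Finset (Fin n) := fun k => (A k).toFinset with hB
  have hsum : (Finset.univ.biUnion B).card = ∑ k, (B k).card := by
    rw [← toFinset_iUnion', ← Set.ncard_eq_toFinset_card' _, h]
    exact Finset.sum_congr rfl fun k _ => Set.ncard_eq_toFinset_card' _
  set B' : Fin r → Finset (Fin n) := fun k => if k = j then (B j).erase a else B k with hB'
  have hunion : Finset.univ.biUnion B' = Finset.univ.biUnion B := by
    ext b
    simp only [Finset.mem_biUnion, Finset.mem_univ, true_and]
    constructor
    · rintro ⟨k, hk⟩
      by_cases hkj : k = j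
      · subst hkj
        rw [hB'] at hk
        simp only [if_pos rfl] at hk
        exact ⟨k, Finset.mem_of_mem_erase hk⟩
      · rw [hB'] at hk
        simp only [if_neg hkj] at hk
        exact ⟨k, hk⟩
    · rintro ⟨k, hk⟩
      by_cases hkj : k = j
      · subst hkj
        by_cases hba : b = a
        · subst hba
          refine ⟨i, ?_⟩
          rw [hB']
          simp only [if_neg hij]
          exact Set.mem_toFinset.2 hai
        · refine ⟨k, ?_⟩
          rw [hB']
          simp only [if_pos rfl]
          exact Finset.mem_erase.2 ⟨hba, hk⟩
      · refine ⟨k, ?_⟩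
        rw [hB']
        simp only [if_neg hkj]
        exact hk
  have haj' : a ∈ B j := Set.mem_toFinset.2 haj
  have hcard_lt : ∑ k, (B' k).card < ∑ k, (B k).card := by
    have hj1 : (B' j).card = (B j).card - 1 := by
      rw [hB']; simp only [if_pos rfl]
      exact Finset.card_erase_of_mem haj'
    have hposj : 0 < (B j).card := Finset.card_pos.2 ⟨a, haj'⟩
    have hrest : ∀ k, k ≠ j → (B' k).card = (B k).card := by
      intro k hk; rw [hB']; simp [if_neg hk]
    have h1 := Finset.sum_eq_sum_sdiff_singleton_add (Finset.mem_univ j) fun k => (B' k).card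
    have h2 := Finset.sum_eq_sum_sdiff_singleton_add (Finset.mem_univ j) fun k => (B k).card
    have h3 : ∑ k ∈ Finset.univ \ {j}, (B' k).card = ∑ k ∈ Finset.univ \ {j}, (B k).card := by
      refine Finset.sum_congr rfl fun k hk => ?_
      exact hrest k (by simpa using (Finset.mem_sdiff.1 hk).2)
    omega
  have : (Finset.univ.biUnion B).card ≤ ∑ k, (B' k).card := by
    rw [← hunion]; exact Finset.card_biUnion_le
  omega

end Aux4
section Aux5

variable {F : Type*} [Field F] {n : ℕ} {P : PartialOrder (Fin n)}

lemma le_component {M : Submodule F (Fin n → F)} {r s : ℕ}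
    (V : Fin r → Submodule F (Fin n → F)) (E : Fin s → Submodule F (Fin n → F))
    (hVsup : ⨆ i, V i = M) (hEsup : ⨆ j, E j = M)
    (hVdisj : Pairwise fun i j => Disjoint (suppS (V i)) (suppS (V j)))
    (hEdisj : Pairwise fun i j => Disjoint (suppS (E i)) (suppS (E j)))
    (hVirr : ∀ i, PIrreducible P (V i)) (i : Fin r) :
    ∃ j, V i ≤ E j := by
  -- V i is the (disjoint-support) sum of its pieces V i ⊓ E j
  have hpieces : V i ≤ ⨆ j, (V i ⊓ E j) := by
    intro x hx
    have hxV : x ∈ ⨆ k, V k := (le_iSup V i) hx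
    have hxE : x ∈ ⨆ k, E k := by rw [hEsup, ← hVsup]; exact hxV
    rw [← sum_cut E hEdisj hxE]
    refine Submodule.sum_mem _ fun j _ => ?_
    have h1 : cutL (suppS (E j)) x ∈ E j := cut_mem E hEdisj j hxE
    have h2 : cutL (suppS (E j)) x ∈ V i := by
      have hmem : cutL (suppS (E j)) x ∈ ⨆ k, V k := by
        rw [hVsup, ← hEsup]; exact (le_iSup E j) h1
      have hz : cutL (suppS (V i)) (cutL (suppS (E j)) x) ∈ V i :=
        cut_mem V hVdisj i hmem
      rwa [cutL_eq_self (fun l hl => mem_suppS_of hx (cutL_support hl).2)] at hz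
    exact Submodule.mem_iSup_of_mem j (Submodule.mem_inf.2 ⟨h2, h1⟩)
  have hVi : (⨆ j, (V i ⊓ E j)) = V i :=
    le_antisymm (iSup_le fun j => inf_le_left) hpieces
  -- the nonzero pieces
  classical
  set t : Finset (Fin s) := Finset.univ.filter (fun j => V i ⊓ E j ≠ ⊥) with ht
  have hdisj' : Pairwise fun (k k' : Fin t.card) =>
      Disjoint (suppS ((fun k => V i ⊓ E ((t.equivFin.symm k : { x // x ∈ t }) : Fin s)) k))
        (suppS ((fun k => V i ⊓ E ((t.equivFin.symm k : { x // x ∈ t }) : Fin s)) k')) := by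
    intro k k' hkk
    have hne : ((t.equivFin.symm k : { x // x ∈ t }) : Fin s) ≠
        ((t.equivFin.symm k' : { x // x ∈ t }) : Fin s) := by
      intro h
      exact hkk (t.equivFin.symm.injective (Subtype.ext h))
    exact Set.disjoint_of_subset (suppS_mono inf_le_right) (suppS_mono inf_le_right)
      (hEdisj hne)
  have hsup' : (⨆ k : Fin t.card, V i ⊓ E ((t.equivFin.symm k : { x // x ∈ t }) : Fin s)) = V i := by
    apply le_antisymm
    · exact iSup_le fun k => inf_le_left
    · have hstep : (⨆ j, V i ⊓ E j) ≤
          ⨆ k : Fin t.card, V i ⊓ E ((t.equivFin.symm k : { x // x ∈ t }) : Fin s) := by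
        refine iSup_le fun j => ?_
        by_cases hj : V i ⊓ E j = ⊥
        · rw [hj]; exact bot_le
        · have hjt : j ∈ t := by rw [ht]; simp [hj]
          refine le_iSup_of_le (t.equivFin ⟨j, hjt⟩)
            (le_of_eq (by rw [Equiv.symm_apply_apply]))
      exact le_trans (le_of_eq hVi.symm) hstep
  have hnb : ∀ k : Fin t.card,
      V i ⊓ E ((t.equivFin.symm k : { x // x ∈ t }) : Fin s) ≠ ⊥ := fun k =>
    (Finset.mem_filter.1 (t.equivFin.symm k).2).2
  have h1 : t.card = 1 :=
    dec_r_eq_one (hVirr i) (LinearEquiv.refl F _) isPIsometry_refl (by ext x; simp)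
      (Decomposition.mk t.card
        (fun k => V i ⊓ E ((t.equivFin.symm k : { x // x ∈ t }) : Fin s))
        hnb (indep_of_disjoint_suppS _ hdisj') hsup' hdisj')
  obtain ⟨j₀, hj₀⟩ := Finset.card_eq_one.1 h1
  refine ⟨j₀, ?_⟩
  rw [← hVi]
  refine iSup_le fun j => ?_
  by_cases hjj : j = j₀
  · subst hjj; exact inf_le_right
  · have : V i ⊓ E j = ⊥ := by
      by_contra hne
      have : j ∈ t := by rw [ht]; simp [hne]
      rw [hj₀, Finset.mem_singleton] at this
      exact hjj this
    rw [this]; exact bot_le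

end Aux5
/-- uniqueness of the containing component among disjoint-support nonzero parts. -/
lemma eq_idx_of_le {F : Type*} [Field F] {n : ℕ} {m : ℕ}
    (A : Fin m → Submodule F (Fin n → F))
    (hd : Pairwise fun i j => Disjoint (suppS (A i)) (suppS (A j)))
    {i i' : Fin m} (hne : A i ≠ ⊥) (h : A i ≤ A i') : i = i' := by
  by_contra hii
  obtain ⟨x, hx, hx0⟩ := (Submodule.ne_bot_iff _).1 hne
  obtain ⟨j, hj⟩ : ∃ j, x j ≠ 0 := by
    by_contra hall
    push_neg at hall
    exact hx0 (funext hall)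
  exact Set.disjoint_left.1 (hd hii) (mem_suppS_of hx hj) (mem_suppS_of (h hx) hj)

/-- **Corollary.** If `C'` and `C''` are two maximal
`P`-decompositions of `C` and `T ∈ GL_P(n)` is a linear `P`-isometry with
`T(C') = C''`, then there is a permutation `σ` of the component indices such that
`T(C'_i) = C''_{σ(i)}` for every `i`. -/
theorem isometry_permutes_components {F : Type*} [Field F] [Fintype F] {n : ℕ}
    (P : PartialOrder (Fin n)) (C : Submodule F (Fin n → F))
    (d' d'' : PDecomposition P C) (h' : d'.IsMaximal) (h'' : d''.IsMaximal)
    (T : (Fin n → F) ≃ₗ[F] (Fin n → F)) (hT : IsPIsometry P T)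
    (hTC : Submodule.map (T : (Fin n → F) →ₗ[F] (Fin n → F)) d'.C' = d''.C') :
    ∃ σ : Fin d'.dec.r ≃ Fin d''.dec.r, ∀ i,
      Submodule.map (T : (Fin n → F) →ₗ[F] (Fin n → F)) (d'.dec.D i) = d''.dec.D (σ i) := by
  classical
  obtain ⟨C₁, T₁, hI₁, hM₁, r₁, D₁, hnb₁, hind₁, hsup₁, hdj₁⟩ := d'
  obtain ⟨C₂, T₂, hI₂, hM₂, r₂, D₂, hnb₂, hind₂, hsup₂, hdj₂⟩ := d''
  replace h' : ∀ i, PIrreducible P (D₁ i) := h'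
  replace h'' : ∀ j, PIrreducible P (D₂ j) := h''
  replace hTC : Submodule.map (T : (Fin n → F) →ₗ[F] (Fin n → F)) C₁ = C₂ := hTC
  show ∃ σ : Fin r₁ ≃ Fin r₂, ∀ i,
    Submodule.map (T : (Fin n → F) →ₗ[F] (Fin n → F)) (D₁ i) = D₂ (σ i)
  set V : Fin r₁ → Submodule F (Fin n → F) :=
    fun i => Submodule.map (T : (Fin n → F) →ₗ[F] (Fin n → F)) (D₁ i) with hV
  set W : Fin r₂ → Submodule F (Fin n → F) :=
    fun j => Submodule.map (T.symm : (Fin n → F) →ₗ[F] (Fin n → F)) (D₂ j) with hW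
  have hVsup : (⨆ i, V i) = C₂ := by
    rw [hV, ← Submodule.map_iSup, hsup₁, hTC]
  have hWsup : (⨆ j, W j) = C₁ := by
    rw [hW, ← Submodule.map_iSup, hsup₂, ← hTC, map_symm_map]
  -- cardinalities
  have hVcard : ∀ i, (suppS (V i)).ncard = (suppS (D₁ i)).ncard := fun i =>
    ncard_suppS_map (h' i) T hT
  have hWcard : ∀ j, (suppS (W j)).ncard = (suppS (D₂ j)).ncard := fun j =>
    ncard_suppS_map (h'' j) T.symm hT.symm'
  have ha : (suppS C₁).ncard = ∑ i, (suppS (D₁ i)).ncard := by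
    rw [← hsup₁, suppS_iSup]
    exact ncard_iUnion_eq _ hdj₁
  have hb : (suppS C₂).ncard = ∑ j, (suppS (D₂ j)).ncard := by
    rw [← hsup₂, suppS_iSup]
    exact ncard_iUnion_eq _ hdj₂
  have hle1 : (suppS C₁).ncard ≤ (suppS C₂).ncard := by
    calc (suppS C₁).ncard = (⋃ j, suppS (W j)).ncard := by rw [← hWsup, suppS_iSup]
      _ ≤ ∑ j, (suppS (W j)).ncard := ncard_iUnion_le _
      _ = ∑ j, (suppS (D₂ j)).ncard := Finset.sum_congr rfl fun j _ => hWcard j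
      _ = (suppS C₂).ncard := hb.symm
  have hle2 : (suppS C₂).ncard ≤ (suppS C₁).ncard := by
    calc (suppS C₂).ncard = (⋃ i, suppS (V i)).ncard := by rw [← hVsup, suppS_iSup]
      _ ≤ ∑ i, (suppS (V i)).ncard := ncard_iUnion_le _
      _ = ∑ i, (suppS (D₁ i)).ncard := Finset.sum_congr rfl fun i _ => hVcard i
      _ = (suppS C₁).ncard := ha.symm
  have hVdisj : Pairwise fun i j => Disjoint (suppS (V i)) (suppS (V j)) := by
    apply disjoint_of_ncard_iUnion
    have h1 : (⋃ i, suppS (V i)).ncard = (suppS C₂).ncard := by rw [← hVsup, suppS_iSup]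
    have h2 : ∑ i, (suppS (V i)).ncard = (suppS C₁).ncard := by
      rw [ha]; exact Finset.sum_congr rfl fun i _ => hVcard i
    omega
  have hVirr : ∀ i, PIrreducible P (V i) := fun i => (h' i).map T hT
  -- containments
  have hA : ∀ i, ∃ j, V i ≤ D₂ j :=
    le_component V D₂ hVsup hsup₂ hVdisj hdj₂ hVirr
  have hB : ∀ j, ∃ i, D₂ j ≤ V i :=
    le_component D₂ V hsup₂ hVsup hdj₂ hVdisj h''
  have hVne : ∀ i, V i ≠ ⊥ := fun i => map_ne_bot T (hnb₁ i)
  have hAeq : ∀ i, ∃ j, V i = D₂ j := by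
    intro i
    obtain ⟨j, hj⟩ := hA i
    obtain ⟨i', hi'⟩ := hB j
    have hii : i = i' := eq_idx_of_le V hVdisj (hVne i) (hj.trans hi')
    subst hii
    exact ⟨j, le_antisymm hj hi'⟩
  have hBeq : ∀ j, ∃ i, D₂ j = V i := by
    intro j
    obtain ⟨i, hi⟩ := hB j
    obtain ⟨j', hj'⟩ := hA i
    have hjj : j = j' := eq_idx_of_le D₂ hdj₂ (hnb₂ j) (hi.trans hj')
    subst hjj
    exact ⟨i, le_antisymm hi hj'⟩
  choose f hf using hAeq
  choose g hg using hBeq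
  refine ⟨⟨f, g, ?_, ?_⟩, fun i => hf i⟩
  · intro i
    have hVV : V (g (f i)) ≤ V i := by rw [← hg (f i), ← hf i]
    exact eq_idx_of_le V hVdisj (hVne _) hVV
  · intro j
    have hEE : D₂ (f (g j)) ≤ D₂ j := by rw [← hf (g j), ← hg j]
    exact eq_idx_of_le D₂ hdj₂ (hnb₂ _) hEE
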